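/- Let Δ be a matroid of rank d on [n] with [d] a basis, and let I ⊆ [n] \ [d] be independent. Then the number of bases B of Δ with B \ [d] = I equals the number of bases of Γ_I, and consequently h_j(Γ_I) is at most the number of monomials of degree j in |I| variables, i.e., h_j(Γ_I) ≤ C(|I| + j − 1, j). -/

import Mathlib

/-- A matroid independence system on ground set `Finset.range n`. -/
def IsMatroidOn (n : ℕ) (Indep : Finset ℕ → Prop) : Prop :=
  Indep ∅ ∧
  (∀ I, Indep I → I ⊆ Finset.range n) ∧
  (∀ I J, I ⊆ J → Indep J → Indep I) ∧
  (∀ I J, Indep I → Indep J → I.card < J.card → ∃ v ∈ J \ I, Indep (insert v I))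

/-- `B` is a basis: a maximal independent set. -/
def IsBasisOf (Indep : Finset ℕ → Prop) (B : Finset ℕ) : Prop :=
  Indep B ∧ ∀ C, Indep C → B ⊆ C → C = B

/-- Lexicographic order on finite subsets of ℕ: the smallest element where the
two sets differ belongs to the smaller set. -/
def lexLt (A B : Finset ℕ) : Prop :=
  ∃ m, m ∈ A ∧ m ∉ B ∧ ∀ k, k < m → (k ∈ A ↔ k ∈ B)

/-- Restriction set of a basis `B` in the lexicographic shelling:
`R(B) = {x ∈ B : (B \ {x}) ∪ {y} is a basis for some y < x}`. -/
noncomputable def restrSet (Indep : Finset ℕ → Prop) (B : Finset ℕ) : Finset ℕ :=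
  @Finset.filter _ (fun x => ∃ y, y < x ∧ IsBasisOf Indep (insert y (B.erase x)))
    (Classical.decPred _) B

/-- The finite set of bases of a matroid on ground set `Finset.range n`. -/
noncomputable def basesOf (Indep : Finset ℕ → Prop) (n : ℕ) : Finset (Finset ℕ) :=
  @Finset.filter _ (IsBasisOf Indep) (Classical.decPred _) (Finset.range n).powerset

/-- The number of bases. -/
noncomputable def numBases (Indep : Finset ℕ → Prop) (n : ℕ) : ℕ := (basesOf Indep n).card

/-- The `i`-th entry of the h-vector: the number of bases whose restriction set
in the lexicographic shelling has cardinality `i`. -/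
noncomputable def hVec (Indep : Finset ℕ → Prop) (n i : ℕ) : ℕ :=
  (@Finset.filter _ (fun B => (restrSet Indep B).card = i) (Classical.decPred _)
    (basesOf Indep n)).card

/-- The independence predicate of the matroid `Γ_I` on ground set `Finset.range d`:
`G` is independent iff `G ⊆ [d]` and `G ∪ I` is independent in the ambient matroid. -/
def GammaIndep (Indep : Finset ℕ → Prop) (d : ℕ) (I : Finset ℕ) : Finset ℕ → Prop :=
  fun G => G ⊆ Finset.range d ∧ Indep (G ∪ I)

-- ===== aux =====
namespace StmtAux


abbrev Exch (Indep : Finset ℕ → Prop) : Prop :=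
  ∀ I J, Indep I → Indep J → I.card < J.card → ∃ v ∈ J \ I, Indep (insert v I)

lemma indep_card_le_basis {Indep : Finset ℕ → Prop} (hex : Exch Indep)
    {B J : Finset ℕ} (hB : IsBasisOf Indep B) (hJ : Indep J) : J.card ≤ B.card := by
  by_contra h
  push_neg at h
  obtain ⟨v, hv, hvi⟩ := hex B J hB.1 hJ h
  have heq := hB.2 _ hvi (Finset.subset_insert _ _)
  simp only [Finset.mem_sdiff] at hv
  exact hv.2 (heq ▸ Finset.mem_insert_self v B)

lemma basis_of_card_eq {Indep : Finset ℕ → Prop} (hex : Exch Indep)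
    {B J : Finset ℕ} (hB : IsBasisOf Indep B) (hJ : Indep J) (hcard : B.card ≤ J.card) :
    IsBasisOf Indep J :=
  ⟨hJ, fun C hC hJC => (Finset.eq_of_subset_of_card_le hJC
    (le_trans (indep_card_le_basis hex hB hC) hcard)).symm⟩

lemma bases_card_eq {Indep : Finset ℕ → Prop} (hex : Exch Indep)
    {B B' : Finset ℕ} (hB : IsBasisOf Indep B) (hB' : IsBasisOf Indep B') :
    B.card = B'.card :=
  le_antisymm (indep_card_le_basis hex hB' hB.1) (indep_card_le_basis hex hB hB'.1)

lemma exists_basis {n : ℕ} {Indep : Finset ℕ → Prop} (hM : IsMatroidOn n Indep) :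
    ∃ B, IsBasisOf Indep B := by
  classical
  have hne : ((Finset.range n).powerset.filter Indep).Nonempty :=
    ⟨∅, by simp [hM.1]⟩
  obtain ⟨B, hBS, hmax⟩ := Finset.exists_max_image _ Finset.card hne
  simp only [Finset.mem_filter, Finset.mem_powerset] at hBS
  refine ⟨B, hBS.2, fun C hC hBC => ?_⟩
  refine (Finset.eq_of_subset_of_card_le hBC (hmax C ?_)).symm
  simp only [Finset.mem_filter, Finset.mem_powerset]
  exact ⟨hM.2.1 _ hC, hC⟩

lemma mem_basesOf {n : ℕ} {Indep : Finset ℕ → Prop} (hM : IsMatroidOn n Indep)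
    {B : Finset ℕ} : B ∈ basesOf Indep n ↔ IsBasisOf Indep B := by
  simp only [basesOf, Finset.mem_filter, Finset.mem_powerset]
  exact ⟨fun h => h.2, fun h => ⟨hM.2.1 _ h.1, h⟩⟩

lemma mem_restrSet {Indep : Finset ℕ → Prop} {B : Finset ℕ} {x : ℕ} :
    x ∈ restrSet Indep B ↔ x ∈ B ∧ ∃ y, y < x ∧ IsBasisOf Indep (insert y (B.erase x)) := by
  simp [restrSet]

lemma ext_to_basis {Indep : Finset ℕ → Prop} (hex : Exch Indep)
    {B₀ : Finset ℕ} (hB₀ : IsBasisOf Indep B₀) :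
    ∀ k (J : Finset ℕ), Indep J → B₀.card - J.card ≤ k →
      ∃ B, J ⊆ B ∧ IsBasisOf Indep B := by
  intro k
  induction k with
  | zero =>
    intro J hJ hk
    have : B₀.card ≤ J.card := by omega
    exact ⟨J, Finset.Subset.refl J, basis_of_card_eq hex hB₀ hJ this⟩
  | succ k ih =>
    intro J hJ hk
    by_cases hc : B₀.card ≤ J.card
    · exact ⟨J, Finset.Subset.refl J, basis_of_card_eq hex hB₀ hJ hc⟩
    · push_neg at hc
      obtain ⟨v, hv, hvi⟩ := hex J B₀ hJ hB₀.1 hc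
      simp only [Finset.mem_sdiff] at hv
      obtain ⟨B, hJB, hBb⟩ := ih (insert v J) hvi (by
        rw [Finset.card_insert_of_notMem hv.2]; omega)
      exact ⟨B, (Finset.subset_insert v J).trans hJB, hBb⟩


section DelCon

variable {m : ℕ} {Indep : Finset ℕ → Prop}

/-- Deletion of the top element `m` from a matroid on `range (m+1)`. -/
def Del (Indep : Finset ℕ → Prop) (m : ℕ) : Finset ℕ → Prop :=
  fun J => Indep J ∧ m ∉ J

/-- Contraction of the top element `m`. -/
def Con (Indep : Finset ℕ → Prop) (m : ℕ) : Finset ℕ → Prop :=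
  fun J => m ∉ J ∧ Indep (insert m J)

lemma del_matroid (hM : IsMatroidOn (m+1) Indep) : IsMatroidOn m (Del Indep m) := by
  obtain ⟨h0, hg, hdown, hex⟩ := hM
  refine ⟨⟨h0, by simp⟩, ?_, ?_, ?_⟩
  · intro J hJ
    intro x hx
    have := hg _ hJ.1 hx
    simp only [Finset.mem_range] at this ⊢
    rcases Nat.lt_succ_iff_lt_or_eq.mp this with h | h
    · exact h
    · exact absurd (h ▸ hx) hJ.2
  · intro A B hAB hB
    exact ⟨hdown _ _ hAB hB.1, fun h => hB.2 (hAB h)⟩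
  · intro A B hA hB hcard
    obtain ⟨v, hv, hvi⟩ := hex A B hA.1 hB.1 hcard
    refine ⟨v, hv, hvi, ?_⟩
    simp only [Finset.mem_insert]
    rintro (rfl | h)
    · exact hB.2 (Finset.mem_sdiff.mp hv).1
    · exact hA.2 h

lemma con_matroid (hM : IsMatroidOn (m+1) Indep) (hloop : Indep {m}) :
    IsMatroidOn m (Con Indep m) := by
  obtain ⟨h0, hg, hdown, hex⟩ := hM
  refine ⟨⟨by simp, by simpa using hloop⟩, ?_, ?_, ?_⟩
  · intro J hJ x hx
    have : x ∈ Finset.range (m+1) := hg _ hJ.2 (Finset.mem_insert_of_mem hx)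
    simp only [Finset.mem_range] at this ⊢
    rcases Nat.lt_succ_iff_lt_or_eq.mp this with h | h
    · exact h
    · exact absurd (h ▸ hx) hJ.1
  · intro A B hAB hB
    exact ⟨fun h => hB.1 (hAB h), hdown _ _ (Finset.insert_subset_insert _ hAB) hB.2⟩
  · intro A B hA hB hcard
    have hcard' : (insert m A).card < (insert m B).card := by
      rw [Finset.card_insert_of_notMem hA.1, Finset.card_insert_of_notMem hB.1]
      omega
    obtain ⟨v, hv, hvi⟩ := hex _ _ hA.2 hB.2 hcard'
    simp only [Finset.mem_sdiff, Finset.mem_insert, not_or] at hv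
    obtain ⟨hv1, hv2, hv3⟩ := hv
    rcases hv1 with rfl | hv1
    · exact absurd rfl hv2
    · refine ⟨v, Finset.mem_sdiff.mpr ⟨hv1, hv3⟩, ?_, ?_⟩
      · simp only [Finset.mem_insert, not_or]
        exact ⟨fun h => hv2 h.symm, hA.1⟩
      · rwa [Finset.insert_comm] at hvi

lemma con_basis_iff {G : Finset ℕ} (hmG : m ∉ G) :
    IsBasisOf (Con Indep m) G ↔ IsBasisOf Indep (insert m G) := by
  constructor
  · rintro ⟨⟨-, hGi⟩, hGmax⟩
    refine ⟨hGi, fun C hC hGC => ?_⟩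
    have hmC : m ∈ C := hGC (Finset.mem_insert_self _ _)
    have hCon : Con Indep m (C.erase m) := by
      refine ⟨Finset.notMem_erase _ _, ?_⟩
      rwa [Finset.insert_erase hmC]
    have hsub : G ⊆ C.erase m := by
      refine Finset.subset_erase.mpr ⟨?_, hmG⟩
      exact (Finset.subset_insert _ _).trans hGC
    have := hGmax _ hCon hsub
    rw [← Finset.insert_erase hmC, this]
  · rintro ⟨hBi, hBmax⟩
    refine ⟨⟨hmG, hBi⟩, fun C hC hGC => ?_⟩
    have := hBmax (insert m C) hC.2 (Finset.insert_subset_insert _ hGC)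
    have h2 : C = (insert m C).erase m := (Finset.erase_insert hC.1).symm
    rw [h2, this, Finset.erase_insert hmG]


lemma del_basis_iff (hex : Exch Indep)
    {B₁ : Finset ℕ} (hB₁ : IsBasisOf Indep B₁) (hmB₁ : m ∉ B₁)
    {S : Finset ℕ} (hmS : m ∉ S) :
    IsBasisOf Indep S ↔ IsBasisOf (Del Indep m) S := by
  constructor
  · intro h
    exact ⟨⟨h.1, hmS⟩, fun C hC hSC => h.2 C hC.1 hSC⟩
  · intro hS
    refine basis_of_card_eq hex hB₁ hS.1.1 ?_
    by_contra h
    push_neg at h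
    obtain ⟨v, hv, hvi⟩ := hex S B₁ hS.1.1 hB₁.1 h
    simp only [Finset.mem_sdiff] at hv
    have hDel : Del Indep m (insert v S) := by
      refine ⟨hvi, ?_⟩
      simp only [Finset.mem_insert, not_or]
      exact ⟨fun hh => hmB₁ (hh ▸ hv.1), hmS⟩
    have heq := hS.2 _ hDel (Finset.subset_insert _ _)
    exact hv.2 (heq ▸ Finset.mem_insert_self v S)

lemma lt_top_of_mem (hM : IsMatroidOn (m+1) Indep) {B : Finset ℕ} (hBi : Indep B)
    {x : ℕ} (hx : x ∈ B) (hxm : x ≠ m) : x < m := by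
  have := hM.2.1 _ hBi hx
  simp only [Finset.mem_range] at this
  omega

lemma restr_del (hM : IsMatroidOn (m+1) Indep) (hex : Exch Indep)
    {B₁ : Finset ℕ} (hB₁ : IsBasisOf Indep B₁) (hmB₁ : m ∉ B₁)
    {B : Finset ℕ} (hmB : m ∉ B) (hBi : Indep B) :
    restrSet Indep B = restrSet (Del Indep m) B := by
  ext x
  simp only [mem_restrSet]
  refine and_congr_right fun hxB => ?_
  have hxm : x < m := lt_top_of_mem hM hBi hxB (fun h => hmB (h ▸ hxB))
  refine exists_congr fun y => and_congr_right fun hyx => ?_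
  have hmS : m ∉ insert y (B.erase x) := by
    simp only [Finset.mem_insert, not_or]
    exact ⟨by omega, fun h => hmB (Finset.mem_of_mem_erase h)⟩
  exact del_basis_iff hex hB₁ hmB₁ hmS

lemma top_mem_restr (hM : IsMatroidOn (m+1) Indep) (hex : Exch Indep)
    {B₁ : Finset ℕ} (hB₁ : IsBasisOf Indep B₁) (hmB₁ : m ∉ B₁)
    {B : Finset ℕ} (hB : IsBasisOf Indep B) (hmB : m ∈ B) :
    m ∈ restrSet Indep B := by
  have hcard : B.card = B₁.card := bases_card_eq hex hB hB₁
  have herase : Indep (B.erase m) := hM.2.2.1 _ _ (Finset.erase_subset _ _) hB.1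
  have hlt : (B.erase m).card < B₁.card := by
    rw [Finset.card_erase_of_mem hmB]
    have : 0 < B.card := Finset.card_pos.mpr ⟨m, hmB⟩
    omega
  obtain ⟨v, hv, hvi⟩ := hex _ _ herase hB₁.1 hlt
  simp only [Finset.mem_sdiff] at hv
  have hvm : v < m := lt_top_of_mem hM hB₁.1 hv.1 (fun h => hmB₁ (h ▸ hv.1))
  refine mem_restrSet.mpr ⟨hmB, v, hvm, ?_⟩
  refine basis_of_card_eq hex hB₁ hvi ?_
  rw [Finset.card_insert_of_notMem hv.2, Finset.card_erase_of_mem hmB]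
  omega

lemma restr_erase_top (hM : IsMatroidOn (m+1) Indep)
    {B : Finset ℕ} (hmB : m ∈ B) (hBi : Indep B) :
    (restrSet Indep B).erase m = restrSet (Con Indep m) (B.erase m) := by
  ext x
  simp only [Finset.mem_erase, mem_restrSet]
  constructor
  · rintro ⟨hxm, hxB, y, hyx, hyb⟩
    have hxm' : x < m := lt_top_of_mem hM hBi hxB hxm
    refine ⟨⟨hxm, hxB⟩, y, hyx, ?_⟩
    have hmZ : m ∉ insert y ((B.erase m).erase x) := by
      simp only [Finset.mem_insert, not_or]
      exact ⟨by omega, fun h => Finset.notMem_erase m _ (Finset.mem_of_mem_erase h)⟩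
    rw [con_basis_iff hmZ]
    have : insert m (insert y ((B.erase m).erase x)) = insert y (B.erase x) := by
      rw [Finset.insert_comm, Finset.erase_right_comm,
        Finset.insert_erase (Finset.mem_erase.mpr ⟨fun h => hxm h.symm, hmB⟩)]
    rwa [this]
  · rintro ⟨⟨hxm, hxB⟩, y, hyx, hyb⟩
    have hxm' : x < m := lt_top_of_mem hM hBi hxB hxm
    refine ⟨hxm, hxB, y, hyx, ?_⟩
    have hmZ : m ∉ insert y ((B.erase m).erase x) := by
      simp only [Finset.mem_insert, not_or]
      exact ⟨by omega, fun h => Finset.notMem_erase m _ (Finset.mem_of_mem_erase h)⟩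
    rw [con_basis_iff hmZ] at hyb
    have : insert m (insert y ((B.erase m).erase x)) = insert y (B.erase x) := by
      rw [Finset.insert_comm, Finset.erase_right_comm,
        Finset.insert_erase (Finset.mem_erase.mpr ⟨fun h => hxm h.symm, hmB⟩)]
    rwa [this] at hyb


lemma loop_pred_eq (hM : IsMatroidOn (m+1) Indep) (hl : ¬ Indep {m}) :
    Del Indep m = Indep := by
  funext J
  refine propext ⟨fun h => h.1, fun h => ⟨h, fun hmJ => ?_⟩⟩
  exact hl (hM.2.2.1 {m} J (by simpa using hmJ) h)

lemma loop_bases_eq (hM : IsMatroidOn (m+1) Indep) (hl : ¬ Indep {m}) :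
    basesOf Indep (m+1) = basesOf Indep m := by
  ext B
  simp only [basesOf, Finset.mem_filter, Finset.mem_powerset]
  refine ⟨fun ⟨h1, h2⟩ => ⟨?_, h2⟩, fun ⟨h1, h2⟩ => ⟨h1.trans ?_, h2⟩⟩
  · intro x hx
    have hxr := h1 hx
    simp only [Finset.mem_range] at hxr ⊢
    rcases Nat.lt_succ_iff_lt_or_eq.mp hxr with h | h
    · exact h
    · subst h
      exact absurd (hM.2.2.1 {x} B (by simpa using hx) h2.1) hl
  · intro x hx
    simp only [Finset.mem_range] at hx ⊢
    omega

lemma loop_hVec (hM : IsMatroidOn (m+1) Indep) (hl : ¬ Indep {m}) {j : ℕ} :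
    hVec Indep (m+1) j = hVec (Del Indep m) m j := by
  rw [loop_pred_eq hM hl]
  unfold hVec
  rw [loop_bases_eq hM hl]

lemma coloop_hVec (hM : IsMatroidOn (m+1) Indep) (hl : Indep {m})
    (hco : ∀ B, IsBasisOf Indep B → m ∈ B) {j : ℕ} :
    hVec Indep (m+1) j = hVec (Con Indep m) m j := by
  classical
  have hex : Exch Indep := hM.2.2.2
  have hMcon := con_matroid hM hl
  have hnr : ∀ B, IsBasisOf Indep B → m ∉ restrSet Indep B := by
    intro B hB hmem
    obtain ⟨hmB, y, hym, hyb⟩ := mem_restrSet.mp hmem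
    have := hco _ hyb
    simp only [Finset.mem_insert] at this
    rcases this with h | h
    · omega
    · exact Finset.notMem_erase m B h
  have hres : ∀ B, IsBasisOf Indep B → m ∈ B →
      restrSet (Con Indep m) (B.erase m) = restrSet Indep B := by
    intro B hB hmB
    rw [← restr_erase_top hM hmB hB.1, Finset.erase_eq_of_notMem (hnr B hB)]
  unfold hVec
  refine Finset.card_bij' (fun B _ => B.erase m) (fun G _ => insert m G) ?_ ?_ ?_ ?_
  · intro B hBmem
    simp only [Finset.mem_filter] at hBmem ⊢
    obtain ⟨hBb, hBr⟩ := hBmem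
    have hBb' := (mem_basesOf hM).mp hBb
    have hmB := hco _ hBb'
    refine ⟨(mem_basesOf hMcon).mpr ?_, ?_⟩
    · rw [con_basis_iff (Finset.notMem_erase _ _), Finset.insert_erase hmB]
      exact hBb'
    · rw [hres B hBb' hmB]
      exact hBr
  · intro G hGmem
    simp only [Finset.mem_filter] at hGmem ⊢
    obtain ⟨hGb, hGr⟩ := hGmem
    have hGb' := (mem_basesOf hMcon).mp hGb
    have hmG : m ∉ G := hGb'.1.1
    have hBb' : IsBasisOf Indep (insert m G) := (con_basis_iff hmG).mp hGb'
    refine ⟨(mem_basesOf hM).mpr hBb', ?_⟩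
    rw [← hres _ hBb' (Finset.mem_insert_self _ _), Finset.erase_insert hmG]
    exact hGr
  · intro B hBmem
    simp only [Finset.mem_filter] at hBmem
    exact Finset.insert_erase (hco _ ((mem_basesOf hM).mp hBmem.1))
  · intro G hGmem
    simp only [Finset.mem_filter] at hGmem
    exact Finset.erase_insert ((mem_basesOf hMcon).mp hGmem.1).1.1

lemma free_hVec_del (hM : IsMatroidOn (m+1) Indep)
    {B₁ : Finset ℕ} (hB₁ : IsBasisOf Indep B₁) (hmB₁ : m ∉ B₁) {j : ℕ} :
    ((basesOf Indep (m+1)).filter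
        (fun B => (restrSet Indep B).card = j ∧ m ∉ B)).card
      = hVec (Del Indep m) m j := by
  classical
  have hex : Exch Indep := hM.2.2.2
  have hMdel := del_matroid hM
  unfold hVec
  congr 1
  ext B
  simp only [Finset.mem_filter]
  constructor
  · rintro ⟨hBb, hBr, hmB⟩
    have hBb' := (mem_basesOf hM).mp hBb
    refine ⟨(mem_basesOf hMdel).mpr ((del_basis_iff hex hB₁ hmB₁ hmB).mp hBb'), ?_⟩
    rw [← restr_del hM hex hB₁ hmB₁ hmB hBb'.1]
    exact hBr
  · rintro ⟨hBb, hBr⟩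
    have hBb' := (mem_basesOf hMdel).mp hBb
    have hmB : m ∉ B := hBb'.1.2
    have hBb'' : IsBasisOf Indep B := (del_basis_iff hex hB₁ hmB₁ hmB).mpr hBb'
    refine ⟨(mem_basesOf hM).mpr hBb'', ?_, hmB⟩
    rw [restr_del hM hex hB₁ hmB₁ hmB hBb''.1]
    exact hBr

lemma free_hVec_con (hM : IsMatroidOn (m+1) Indep) (hl : Indep {m})
    {B₁ : Finset ℕ} (hB₁ : IsBasisOf Indep B₁) (hmB₁ : m ∉ B₁) {j : ℕ} :
    ((basesOf Indep (m+1)).filter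
        (fun B => (restrSet Indep B).card = j + 1 ∧ m ∈ B)).card
      = hVec (Con Indep m) m j := by
  classical
  have hex : Exch Indep := hM.2.2.2
  have hMcon := con_matroid hM hl
  unfold hVec
  refine Finset.card_bij' (fun B _ => B.erase m) (fun G _ => insert m G) ?_ ?_ ?_ ?_
  · intro B hBmem
    simp only [Finset.mem_filter] at hBmem ⊢
    obtain ⟨hBb, hBr, hmB⟩ := hBmem
    have hBb' := (mem_basesOf hM).mp hBb
    refine ⟨(mem_basesOf hMcon).mpr ?_, ?_⟩
    · rw [con_basis_iff (Finset.notMem_erase _ _), Finset.insert_erase hmB]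
      exact hBb'
    · rw [← restr_erase_top hM hmB hBb'.1,
        Finset.card_erase_of_mem (top_mem_restr hM hex hB₁ hmB₁ hBb' hmB), hBr]
      omega
  · intro G hGmem
    simp only [Finset.mem_filter] at hGmem ⊢
    obtain ⟨hGb, hGr⟩ := hGmem
    have hGb' := (mem_basesOf hMcon).mp hGb
    have hmG : m ∉ G := hGb'.1.1
    have hBb' : IsBasisOf Indep (insert m G) := (con_basis_iff hmG).mp hGb'
    have hmB : m ∈ insert m G := Finset.mem_insert_self _ _
    refine ⟨(mem_basesOf hM).mpr hBb', ?_, hmB⟩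
    have h1 : ((restrSet Indep (insert m G)).erase m).card = j := by
      rw [restr_erase_top hM hmB hBb'.1, Finset.erase_insert hmG]
      exact hGr
    have h2 := Finset.card_erase_add_one (top_mem_restr hM hex hB₁ hmB₁ hBb' hmB)
    omega
  · intro B hBmem
    simp only [Finset.mem_filter] at hBmem
    exact Finset.insert_erase hBmem.2.2
  · intro G hGmem
    simp only [Finset.mem_filter] at hGmem
    exact Finset.erase_insert ((mem_basesOf hMcon).mp hGmem.1).1.1

lemma free_hVec_zero (hM : IsMatroidOn (m+1) Indep) (hl : Indep {m})
    {B₁ : Finset ℕ} (hB₁ : IsBasisOf Indep B₁) (hmB₁ : m ∉ B₁) :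
    ((basesOf Indep (m+1)).filter
        (fun B => (restrSet Indep B).card = 0 ∧ m ∈ B)).card = 0 := by
  classical
  have hex : Exch Indep := hM.2.2.2
  rw [Finset.card_eq_zero, Finset.filter_eq_empty_iff]
  rintro B hBb ⟨hBr, hmB⟩
  have hBb' := (mem_basesOf hM).mp hBb
  have := top_mem_restr hM hex hB₁ hmB₁ hBb' hmB
  rw [Finset.card_eq_zero] at hBr
  rw [hBr] at this
  exact absurd this (Finset.notMem_empty m)

lemma split_card (hM : IsMatroidOn (m+1) Indep) {j : ℕ} :
    hVec Indep (m+1) j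
      = ((basesOf Indep (m+1)).filter
          (fun B => (restrSet Indep B).card = j ∧ m ∉ B)).card
      + ((basesOf Indep (m+1)).filter
          (fun B => (restrSet Indep B).card = j ∧ m ∈ B)).card := by
  classical
  unfold hVec
  rw [← Finset.filter_filter, ← Finset.filter_filter]
  have h := Finset.card_filter_add_card_filter_not
    (s := Finset.filter (fun B => (restrSet Indep B).card = j) (basesOf Indep (m+1)))
    (p := fun B => m ∉ B)
  simp only [not_not] at h
  convert h.symm using 3

end DelCon


lemma ubt : ∀ (m : ℕ) (Indep : Finset ℕ → Prop) (r : ℕ),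
    IsMatroidOn m Indep → (∃ B₀, IsBasisOf Indep B₀ ∧ B₀.card = r) →
    ∀ j, hVec Indep m j ≤ ((m - r) + j - 1).choose j := by
  intro m
  induction m with
  | zero =>
    intro Indep r hM _ j
    have hb : ∀ B, B ∈ basesOf Indep 0 → B = ∅ := by
      intro B hB
      simp only [basesOf, Finset.mem_filter, Finset.mem_powerset, Finset.range_zero,
        Finset.subset_empty] at hB
      exact hB.1
    match j with
    | 0 =>
      simp only [Nat.choose_zero_right]
      unfold hVec
      refine le_trans (@Finset.card_filter_le _ _ _ (Classical.decPred _)) ?_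
      unfold basesOf
      refine le_trans (@Finset.card_filter_le _ _ _ (Classical.decPred _)) ?_
      simp
    | (j+1) =>
      have h0 : hVec Indep 0 (j+1) = 0 := by
        unfold hVec
        rw [Finset.card_eq_zero]
        refine Finset.eq_empty_iff_forall_notMem.mpr ?_
        intro B hB
        simp only [Finset.mem_filter] at hB
        obtain ⟨hB1, hB2⟩ := hB
        rw [hb B hB1] at hB2
        simp only [restrSet] at hB2
        rw [Finset.filter_empty] at hB2
        simp at hB2
      omega
  | succ m ih =>
    intro Indep r hM hex0 j
    obtain ⟨B₀, hB₀, hrB₀⟩ := hex0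
    have hex : Exch Indep := hM.2.2.2
    by_cases hl : Indep {m}
    · by_cases hco : ∀ B, IsBasisOf Indep B → m ∈ B
      · -- coloop case
        have hmB₀ := hco _ hB₀
        have hr1 : 1 ≤ r := by
          have : 0 < B₀.card := Finset.card_pos.mpr ⟨m, hmB₀⟩
          omega
        have hMcon := con_matroid hM hl
        have hGb : IsBasisOf (Con Indep m) (B₀.erase m) := by
          rw [con_basis_iff (Finset.notMem_erase _ _), Finset.insert_erase hmB₀]
          exact hB₀
        have hcard : (B₀.erase m).card = r - 1 := by
          rw [Finset.card_erase_of_mem hmB₀, hrB₀]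
        rw [coloop_hVec hM hl hco]
        have := ih (Con Indep m) (r-1) hMcon ⟨_, hGb, hcard⟩ j
        have harith : m - (r - 1) = m + 1 - r := by omega
        rwa [harith] at this
      · -- m is in some but not all bases, or in no basis
        push_neg at hco
        obtain ⟨B₁, hB₁, hmB₁⟩ := hco
        have hrB₁ : B₁.card = r := by rw [bases_card_eq hex hB₁ hB₀, hrB₀]
        have hrm : r ≤ m := by
          have hsub : B₁ ⊆ Finset.range m := by
            intro x hx
            simp only [Finset.mem_range]
            exact lt_top_of_mem hM hB₁.1 hx (fun h => hmB₁ (h ▸ hx))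
          calc r = B₁.card := hrB₁.symm
            _ ≤ (Finset.range m).card := Finset.card_le_card hsub
            _ = m := by simp
        have hMdel := del_matroid hM
        have hMcon := con_matroid hM hl
        have hdelB : IsBasisOf (Del Indep m) B₁ :=
          (del_basis_iff hex hB₁ hmB₁ hmB₁).mp hB₁
        -- a basis containing m
        obtain ⟨B₂, hmB₂', hB₂⟩ := ext_to_basis hex hB₀ B₀.card {m}
          (hl) (by omega)
        have hmB₂ : m ∈ B₂ := hmB₂' (Finset.mem_singleton_self m)
        have hrB₂ : B₂.card = r := by rw [bases_card_eq hex hB₂ hB₀, hrB₀]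
        have hconB : IsBasisOf (Con Indep m) (B₂.erase m) := by
          rw [con_basis_iff (Finset.notMem_erase _ _), Finset.insert_erase hmB₂]
          exact hB₂
        have hconcard : (B₂.erase m).card = r - 1 := by
          rw [Finset.card_erase_of_mem hmB₂, hrB₂]
        have hr1 : 1 ≤ r := by
          have : 0 < B₂.card := Finset.card_pos.mpr ⟨m, hmB₂⟩
          omega
        have hdel := ih (Del Indep m) r hMdel ⟨_, hdelB, hrB₁⟩
        have hcon := ih (Con Indep m) (r-1) hMcon ⟨_, hconB, hconcard⟩
        match j with
        | 0 =>
          rw [split_card hM, free_hVec_del hM hB₁ hmB₁, free_hVec_zero hM hl hB₁ hmB₁]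
          have h1 := hdel 0
          simp only [Nat.choose_zero_right] at h1 ⊢
          omega
        | (j+1) =>
          rw [split_card hM, free_hVec_del hM hB₁ hmB₁, free_hVec_con hM hl hB₁ hmB₁]
          have h1 := hdel (j+1)
          have h2 := hcon j
          have e1 : m - r + (j + 1) - 1 = (m - r) + j := by omega
          have e2 : m - (r - 1) + j - 1 = (m - r) + j := by omega
          have e3 : m + 1 - r + (j + 1) - 1 = ((m - r) + j) + 1 := by omega
          rw [e1] at h1
          rw [e2] at h2
          rw [e3, Nat.choose_succ_succ]
          simp only [Nat.succ_eq_add_one] at *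
          omega
    · -- loop case
      have hDel : Del Indep m = Indep := loop_pred_eq hM hl
      have hMdel := del_matroid hM
      rw [loop_hVec hM hl]
      have hB₀' : IsBasisOf (Del Indep m) B₀ := by rw [hDel]; exact hB₀
      have := ih (Del Indep m) r hMdel ⟨_, hB₀', hrB₀⟩ j
      refine this.trans (Nat.choose_le_choose j ?_)
      omega

end StmtAux


namespace StmtAux

section Gamma

variable {n d : ℕ} {Indep : Finset ℕ → Prop} {I : Finset ℕ}

lemma gamma_matroid (hM : IsMatroidOn n Indep) (hI : Indep I)
    (hdisj : Disjoint I (Finset.range d)) :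
    IsMatroidOn d (GammaIndep Indep d I) := by
  obtain ⟨h0, hg, hdown, hex⟩ := hM
  refine ⟨⟨Finset.empty_subset _, by simpa using hI⟩, fun G hG => hG.1, ?_, ?_⟩
  · intro A B hAB hB
    exact ⟨hAB.trans hB.1, hdown _ _ (Finset.union_subset_union_left hAB) hB.2⟩
  · intro A B hA hB hcard
    have hdA : Disjoint A I := (hdisj.mono_right hA.1).symm
    have hdB : Disjoint B I := (hdisj.mono_right hB.1).symm
    have hcard' : (A ∪ I).card < (B ∪ I).card := by
      rw [Finset.card_union_of_disjoint hdA, Finset.card_union_of_disjoint hdB]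
      omega
    obtain ⟨v, hv, hvi⟩ := hex _ _ hA.2 hB.2 hcard'
    simp only [Finset.mem_sdiff, Finset.mem_union, not_or] at hv
    obtain ⟨hv1, hv2, hv3⟩ := hv
    rcases hv1 with hv1 | hv1
    · refine ⟨v, Finset.mem_sdiff.mpr ⟨hv1, hv2⟩, ?_, ?_⟩
      · exact Finset.insert_subset (hB.1 hv1) hA.1
      · rw [Finset.insert_union]
        exact hvi
    · exact absurd hv1 hv3

lemma gamma_basis_iff (hM : IsMatroidOn n Indep)
    (hB : IsBasisOf Indep (Finset.range d)) (hdisj : Disjoint I (Finset.range d))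
    {G : Finset ℕ} :
    IsBasisOf (GammaIndep Indep d I) G ↔
      (G ⊆ Finset.range d ∧ IsBasisOf Indep (G ∪ I)) := by
  have hex : Exch Indep := hM.2.2.2
  constructor
  · intro hG
    refine ⟨hG.1.1, ?_⟩
    refine basis_of_card_eq hex hB hG.1.2 ?_
    rw [Finset.card_range]
    by_contra h
    push_neg at h
    have h' : (G ∪ I).card < (Finset.range d).card := by
      rw [Finset.card_range]; exact h
    obtain ⟨v, hv, hvi⟩ := hex _ _ hG.1.2 hB.1 h'
    simp only [Finset.mem_sdiff, Finset.mem_union, not_or] at hv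
    obtain ⟨hv1, hv2, hv3⟩ := hv
    have hΓ : GammaIndep Indep d I (insert v G) := by
      refine ⟨Finset.insert_subset hv1 hG.1.1, ?_⟩
      rwa [Finset.insert_union]
    have := hG.2 _ hΓ (Finset.subset_insert _ _)
    exact hv2 (this ▸ Finset.mem_insert_self v G)
  · rintro ⟨hGsub, hGB⟩
    refine ⟨⟨hGsub, hGB.1⟩, fun C hC hGC => ?_⟩
    have hCU := hGB.2 (C ∪ I) hC.2 (Finset.union_subset_union_left hGC)
    refine Finset.Subset.antisymm ?_ hGC
    intro x hx
    have hx' : x ∈ G ∪ I := hCU ▸ Finset.mem_union_left I hx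
    have hxd : x ∈ Finset.range d := hC.1 hx
    have hxI : x ∉ I := fun h => (Finset.disjoint_left.mp hdisj h) hxd
    simp only [Finset.mem_union] at hx'
    tauto

lemma gamma_basis_card (hM : IsMatroidOn n Indep)
    (hB : IsBasisOf Indep (Finset.range d)) (hdisj : Disjoint I (Finset.range d))
    {G : Finset ℕ} (hG : IsBasisOf (GammaIndep Indep d I) G) :
    G.card + I.card = d := by
  have hex : Exch Indep := hM.2.2.2
  obtain ⟨hGsub, hGB⟩ := (gamma_basis_iff hM hB hdisj).mp hG
  have h1 : (G ∪ I).card = d := by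
    have := bases_card_eq hex hGB hB
    rwa [Finset.card_range] at this
  have hdG : Disjoint G I := (hdisj.mono_right hGsub).symm
  rwa [Finset.card_union_of_disjoint hdG] at h1

end Gamma

end StmtAux


/-- The bases `B` of `Δ` with `B \ [d] = I` are counted by the bases of `Γ_I`,
and `h_j(Γ_I) ≤ C(|I| + j - 1, j)`. -/
theorem stmt_8 (n d : ℕ) (Indep : Finset ℕ → Prop)
    (hM : IsMatroidOn n Indep) (hB : IsBasisOf Indep (Finset.range d))
    (I : Finset ℕ) (hI : Indep I) (hdisj : Disjoint I (Finset.range d)) :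
    (@Finset.filter _ (fun B => B \ Finset.range d = I) (Classical.decPred _)
        (basesOf Indep n)).card = numBases (GammaIndep Indep d I) d ∧
    ∀ j, hVec (GammaIndep Indep d I) d j ≤ Nat.choose (I.card + j - 1) j := by
  classical
  have hex : StmtAux.Exch Indep := hM.2.2.2
  have hMΓ := StmtAux.gamma_matroid (d := d) hM hI hdisj
  constructor
  · unfold numBases
    refine Finset.card_bij' (fun B _ => B ∩ Finset.range d) (fun G _ => G ∪ I) ?_ ?_ ?_ ?_
    · intro B hBmem
      simp only [Finset.mem_filter] at hBmem
      obtain ⟨hBb, hBI⟩ := hBmem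
      have hBb' := (StmtAux.mem_basesOf hM).mp hBb
      have key : B ∩ Finset.range d ∪ I = B := by
        rw [← hBI]
        ext x
        simp only [Finset.mem_union, Finset.mem_inter, Finset.mem_sdiff]
        tauto
      refine (StmtAux.mem_basesOf hMΓ).mpr ?_
      refine (StmtAux.gamma_basis_iff hM hB hdisj).mpr ⟨Finset.inter_subset_right, ?_⟩
      rw [key]
      exact hBb'
    · intro G hGmem
      have hG := (StmtAux.mem_basesOf hMΓ).mp hGmem
      obtain ⟨hGsub, hGB⟩ := (StmtAux.gamma_basis_iff hM hB hdisj).mp hG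
      simp only [Finset.mem_filter]
      refine ⟨(StmtAux.mem_basesOf hM).mpr hGB, ?_⟩
      ext x
      simp only [Finset.mem_sdiff, Finset.mem_union]
      constructor
      · rintro ⟨hx1 | hx1, hx2⟩
        · exact absurd (hGsub hx1) hx2
        · exact hx1
      · intro hx
        exact ⟨Or.inr hx, fun h => (Finset.disjoint_left.mp hdisj hx) h⟩
    · intro B hBmem
      simp only [Finset.mem_filter] at hBmem
      show B ∩ Finset.range d ∪ I = B
      have key : B ∩ Finset.range d ∪ (B \ Finset.range d) = B := by
        ext x
        simp only [Finset.mem_union, Finset.mem_inter, Finset.mem_sdiff]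
        tauto
      rw [hBmem.2] at key
      exact key
    · intro G hGmem
      have hG := (StmtAux.mem_basesOf hMΓ).mp hGmem
      obtain ⟨hGsub, -⟩ := (StmtAux.gamma_basis_iff hM hB hdisj).mp hG
      ext x
      simp only [Finset.mem_inter, Finset.mem_union, Finset.mem_range]
      constructor
      · rintro ⟨hx1 | hx1, hx2⟩
        · exact hx1
        · exact absurd (Finset.mem_range.mpr hx2) (Finset.disjoint_left.mp hdisj hx1)
      · intro hx
        have := hGsub hx
        simp only [Finset.mem_range] at this
        exact ⟨Or.inl hx, this⟩
  · intro j
    obtain ⟨G₀, hG₀⟩ := StmtAux.exists_basis hMΓ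
    have hcard := StmtAux.gamma_basis_card hM hB hdisj hG₀
    have hubt := StmtAux.ubt d (GammaIndep Indep d I) (d - I.card) hMΓ
      ⟨G₀, hG₀, by omega⟩ j
    have harith : d - (d - I.card) = I.card := by omega
    rwa [harith] at hubt
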